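/- Let λ > 0 and 0 < C < K, and set a := 1 − C/K ∈ (0,1). Then: (i) the equation 1 + λ p = a * exp(λ p) has at most one solution p ∈ [0, ∞); and (ii) if w ∈ ℝ satisfies w ≤ −1 and w * exp(w) = −a * exp(−1), then p := −(1 + w)/λ satisfies p ≥ 0 and 1 + λ p = a * exp(λ p). -/

import Mathlib

/-- single type, `1/2 < τ ≤ 1`: For `λ > 0`, `0 < C < K` and
`a := 1 − C/K ∈ (0,1)`: (i) the equilibrium equation `1 + λ p = a * exp (λ p)`
has at most one solution `p ∈ [0,∞)`; and (ii) if `w ≤ −1` satisfies the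
Lambert-W relation `w * exp w = −a * exp (−1)`, then `p := −(1 + w)/λ` is a
nonnegative solution: `p ≥ 0` and `1 + λ p = a * exp (λ p)`. -/
theorem single_type_lambertW_equilibrium
    (lam C K : ℝ) (hlam : 0 < lam) (hC : 0 < C) (hCK : C < K)
    (a : ℝ) (ha : a = 1 - C / K) :
    (∀ p q : ℝ, 0 ≤ p → 0 ≤ q →
      1 + lam * p = a * Real.exp (lam * p) →
      1 + lam * q = a * Real.exp (lam * q) → p = q) ∧
    (∀ w : ℝ, w ≤ -1 → w * Real.exp w = -a * Real.exp (-1) →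
      0 ≤ -(1 + w) / lam ∧
      1 + lam * (-(1 + w) / lam) = a * Real.exp (lam * (-(1 + w) / lam))) := by
  constructor
  · -- uniqueness via strict antitonicity of g(x) = (1+x) e^{-x} on [0,∞)
    have hd : ∀ x : ℝ, HasDerivAt (fun y => (1 + y) * Real.exp (-y))
        (-x * Real.exp (-x)) x := by
      intro x
      have h1 : HasDerivAt (fun y : ℝ => 1 + y) 1 x := (hasDerivAt_id x).const_add 1
      have h2 : HasDerivAt (fun y : ℝ => Real.exp (-y)) (-Real.exp (-x)) x := by
        have := (Real.hasDerivAt_exp (-x)).comp x ((hasDerivAt_id x).neg)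
        simpa [Function.comp_def] using this
      have := h1.mul h2
      refine this.congr_deriv ?_
      ring
    have hanti : StrictAntiOn (fun y => (1 + y) * Real.exp (-y)) (Set.Ici (0:ℝ)) := by
      apply strictAntiOn_of_deriv_neg (convex_Ici 0)
      · exact Continuous.continuousOn (by continuity)
      · intro x hx
        rw [interior_Ici] at hx
        rw [(hd x).deriv]
        have hx0 : (0:ℝ) < x := hx
        nlinarith [Real.exp_pos (-x)]
    intro p q hp hq hep heq
    have key : ∀ r : ℝ, 1 + lam * r = a * Real.exp (lam * r) →
        (1 + lam * r) * Real.exp (-(lam * r)) = a := by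
      intro r hr
      rw [hr, mul_assoc, ← Real.exp_add]
      simp
    have h1 := key p hep
    have h2 := key q heq
    have hlp : lam * p ∈ Set.Ici (0:ℝ) := mul_nonneg hlam.le hp
    have hlq : lam * q ∈ Set.Ici (0:ℝ) := mul_nonneg hlam.le hq
    have := hanti.injOn hlp hlq (h1.trans h2.symm)
    exact mul_left_cancel₀ hlam.ne' this
  · intro w hw hlw
    have hp : 0 ≤ -(1 + w) / lam := by
      apply div_nonneg _ hlam.le
      linarith
    refine ⟨hp, ?_⟩
    have hlp : lam * (-(1 + w) / lam) = -(1 + w) := by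
      field_simp
    rw [hlp]
    have he : Real.exp (-(1 + w)) = Real.exp (-1) * Real.exp (-w) := by
      rw [← Real.exp_add]; ring_nf
    have hew : Real.exp w * Real.exp (-w) = 1 := by
      rw [← Real.exp_add]; simp
    rw [he]
    nlinarith [Real.exp_pos (-w), Real.exp_pos (-1)]
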